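/- arXiv:1008.2563 — 4 statements merged into one kernel-verified Lean document; each statement's English description precedes it below -/
import Mathlib

section
/- For any invertible linear map D : ℝ^d → ℝ^d and any unit vectors w, v in ℝ^d, one has 2(1 − cos∠(Dw, Dv)) ≤ K(D)² · ‖w − v‖², where K(D) = ‖D‖·‖D⁻¹‖ and ∠(u₁,u₂) denotes the angle between nonzero vectors, i.e. cos∠(u₁,u₂) = ⟨u₁,u₂⟩/(‖u₁‖‖u₂‖). -/
open InnerProductGeometry
open scoped RealInnerProductSpace

/-- Quasiconformal distortion `K(D) = ‖D‖·‖D⁻¹‖` of an invertible linear map of `ℝ^d`. -/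
noncomputable def qdist {d : ℕ}
    (D : EuclideanSpace ℝ (Fin d) ≃L[ℝ] EuclideanSpace ℝ (Fin d)) : ℝ :=
  ‖(D : EuclideanSpace ℝ (Fin d) →L[ℝ] EuclideanSpace ℝ (Fin d))‖ *
    ‖(D.symm : EuclideanSpace ℝ (Fin d) →L[ℝ] EuclideanSpace ℝ (Fin d))‖

/-- For unit vectors `w, v`, `2(1 − cos∠(Dw, Dv)) ≤ K(D)²·‖w − v‖²`, where the angle
`∠(u₁,u₂) ∈ [0,π]` satisfies `cos∠(u₁,u₂) = ⟨u₁,u₂⟩/(‖u₁‖‖u₂‖)`. -/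
theorem stmt_2 {d : ℕ} (D : EuclideanSpace ℝ (Fin d) ≃L[ℝ] EuclideanSpace ℝ (Fin d))
    (w v : EuclideanSpace ℝ (Fin d)) (hw : ‖w‖ = 1) (hv : ‖v‖ = 1) :
    2 * (1 - Real.cos (angle (D w) (D v))) ≤ (qdist D) ^ 2 * ‖w - v‖ ^ 2 := by
  set A := (D : EuclideanSpace ℝ (Fin d) →L[ℝ] EuclideanSpace ℝ (Fin d)) with hA
  set B := (D.symm : EuclideanSpace ℝ (Fin d) →L[ℝ] EuclideanSpace ℝ (Fin d)) with hB
  have hw0 : w ≠ 0 := by intro h; rw [h, norm_zero] at hw; norm_num at hw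
  have hv0 : v ≠ 0 := by intro h; rw [h, norm_zero] at hv; norm_num at hv
  have ha : (0:ℝ) < ‖D w‖ := by
    rw [norm_pos_iff]
    simpa using hw0
  have hb : (0:ℝ) < ‖D v‖ := by
    rw [norm_pos_iff]
    simpa using hv0
  have hBa : 1 ≤ ‖B‖ * ‖D w‖ := by
    calc 1 = ‖B (D w)‖ := by simp [hB, hw]
    _ ≤ ‖B‖ * ‖D w‖ := B.le_opNorm _
  have hBb : 1 ≤ ‖B‖ * ‖D v‖ := by
    calc 1 = ‖B (D v)‖ := by simp [hB, hv]
    _ ≤ ‖B‖ * ‖D v‖ := B.le_opNorm _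
  have hsub : ‖D w - D v‖ ≤ ‖A‖ * ‖w - v‖ := by
    have : D w - D v = A (w - v) := by simp [hA]
    rw [this]; exact A.le_opNorm _
  have hsq : ‖D w - D v‖ ^ 2 =
      ‖D w‖ ^ 2 - 2 * ⟪D w, D v⟫ + ‖D v‖ ^ 2 :=
    norm_sub_pow_two_real _ _
  have hcos : Real.cos (angle (D w) (D v)) = ⟪D w, D v⟫ / (‖D w‖ * ‖D v‖) :=
    cos_angle _ _
  rw [hcos]
  have h1 : 2 * (1 - ⟪D w, D v⟫ / (‖D w‖ * ‖D v‖)) =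
      (2 * ‖D w‖ * ‖D v‖ - 2 * ⟪D w, D v⟫) / (‖D w‖ * ‖D v‖) := by
    field_simp
  rw [h1]
  have h2 : (2 * ‖D w‖ * ‖D v‖ - 2 * ⟪D w, D v⟫) / (‖D w‖ * ‖D v‖) ≤
      ‖D w - D v‖ ^ 2 / (‖D w‖ * ‖D v‖) := by
    apply div_le_div_of_nonneg_right ?_ (by positivity : (0:ℝ) ≤ ‖D w‖ * ‖D v‖)
    nlinarith [sq_nonneg (‖D w‖ - ‖D v‖)]
  have h3 : ‖D w - D v‖ ^ 2 / (‖D w‖ * ‖D v‖) ≤ ‖D w - D v‖ ^ 2 * (‖B‖ * ‖B‖) := by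
    rw [div_le_iff₀ (by positivity)]
    nlinarith [sq_nonneg (‖D w - D v‖), mul_le_mul hBa hBb zero_le_one
      (le_trans zero_le_one hBa)]
  have h4 : ‖D w - D v‖ ^ 2 ≤ (‖A‖ * ‖w - v‖) ^ 2 := by
    apply pow_le_pow_left₀ (norm_nonneg _) hsub
  have hKs : qdist D ^ 2 * ‖w - v‖ ^ 2 = (‖A‖ * ‖w - v‖) ^ 2 * (‖B‖ * ‖B‖) := by
    simp only [qdist, ← hA, ← hB]; ring
  rw [hKs]
  calc (2 * ‖D w‖ * ‖D v‖ - 2 * ⟪D w, D v⟫) / (‖D w‖ * ‖D v‖)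
      ≤ ‖D w - D v‖ ^ 2 / (‖D w‖ * ‖D v‖) := h2
    _ ≤ ‖D w - D v‖ ^ 2 * (‖B‖ * ‖B‖) := h3
    _ ≤ (‖A‖ * ‖w - v‖) ^ 2 * (‖B‖ * ‖B‖) := by
        apply mul_le_mul_of_nonneg_right h4 (by positivity)
end

section
/- Let F : ℤ → GL(d,ℝ) define a sequence of invertible linear maps with uniformly bounded distortion: there exist C_ε and ε > 0 with ‖F^n_k‖·‖(F^n_k)⁻¹‖ ≤ C_ε e^{ε|n|} for all k, n ∈ ℤ, where F^n_k denotes the composition of the maps along positions k, …, k+n−1. Fix a unit vector u ∈ ℝ^d and set u_k equal to the normalized image of u under the composition from position 0 to k. Then the formula ‖v‖_k² = Σ_{m∈ℤ} ‖F^m_k(v)‖² / (‖F^m_k(u_k)‖² · e^{3|m|ε}) defines a norm on ℝ^d at each position k, the series converging, and there exists M_ε with ‖v‖ ≤ ‖v‖_k ≤ M_ε‖v‖ for all k and v. -/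
noncomputable section
open ENNReal

lemma l2_tri (f g : ℤ → ℝ) (hf : Summable fun m => f m ^ 2) (hg : Summable fun m => g m ^ 2) :
    Real.sqrt (∑' m, (f m + g m) ^ 2) ≤
      Real.sqrt (∑' m, f m ^ 2) + Real.sqrt (∑' m, g m ^ 2) := by
  haveI : Fact ((1 : ℝ≥0∞) ≤ 2) := ⟨by norm_num⟩
  have h2 : (0 : ℝ) < (2 : ℝ≥0∞).toReal := by norm_num
  have hr : ∀ x : ℝ, x ^ ((2 : ℝ≥0∞).toReal) = x ^ 2 := by
    intro x
    rw [show ((2 : ℝ≥0∞).toReal) = ((2 : ℕ) : ℝ) by norm_num, Real.rpow_natCast]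
  have hmem : ∀ h : ℤ → ℝ, Summable (fun m => h m ^ 2) → Memℓp h 2 := by
    intro h hh
    apply memℓp_gen
    convert hh using 2 with m
    rw [hr, Real.norm_eq_abs, sq_abs]
  have hnorm : ∀ x : lp (fun _ : ℤ => ℝ) 2, ‖x‖ = Real.sqrt (∑' m, (x m) ^ 2) := by
    intro x
    have := lp.norm_rpow_eq_tsum h2 x
    simp only [hr, Real.norm_eq_abs, sq_abs] at this
    rw [← this, Real.sqrt_sq (norm_nonneg _)]
  set F : lp (fun _ : ℤ => ℝ) 2 := ⟨f, hmem f hf⟩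
  set G : lp (fun _ : ℤ => ℝ) 2 := ⟨g, hmem g hg⟩
  have hFG : ∀ m, (F + G) m = f m + g m := fun m => rfl
  have h1 : Real.sqrt (∑' m, (f m + g m) ^ 2) = ‖F + G‖ := by
    rw [hnorm]
    exact congrArg Real.sqrt (tsum_congr fun m => by rw [hFG])
  have h2' : Real.sqrt (∑' m, f m ^ 2) = ‖F‖ := by rw [hnorm]
  have h3 : Real.sqrt (∑' m, g m ^ 2) = ‖G‖ := by rw [hnorm]
  rw [h1, h2', h3]
  exact norm_add_le F G


/-- The cocycle `F^n_k = P(k+n)∘(P k)⁻¹`, where `P k` is the composition of the maps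
from position `0` to position `k` (so `F^n_k` is the composition along positions
`k, …, k+n−1`, with the inverse composition for `n < 0`). -/
def coc {d : ℕ} (P : ℤ → (EuclideanSpace ℝ (Fin d) ≃L[ℝ] EuclideanSpace ℝ (Fin d)))
    (k n : ℤ) : EuclideanSpace ℝ (Fin d) ≃L[ℝ] EuclideanSpace ℝ (Fin d) :=
  (P k).symm.trans (P (k + n))

/-- `u_k`: the normalized image of `u` under the composition from position `0` to `k`. -/
def uvec {d : ℕ} (P : ℤ → (EuclideanSpace ℝ (Fin d) ≃L[ℝ] EuclideanSpace ℝ (Fin d)))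
    (u : EuclideanSpace ℝ (Fin d)) (k : ℤ) : EuclideanSpace ℝ (Fin d) :=
  ‖P k u‖⁻¹ • P k u

/-- The term of the series defining the adapted norm `‖·‖_k`. -/
def nrmTerm {d : ℕ} (P : ℤ → (EuclideanSpace ℝ (Fin d) ≃L[ℝ] EuclideanSpace ℝ (Fin d)))
    (u : EuclideanSpace ℝ (Fin d)) (ε : ℝ) (k : ℤ) (v : EuclideanSpace ℝ (Fin d))
    (m : ℤ) : ℝ :=
  ‖coc P k m v‖ ^ 2 / (‖coc P k m (uvec P u k)‖ ^ 2 * Real.exp (3 * |(m : ℝ)| * ε))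

/-- The adapted norm `‖v‖_k = (Σ_m ‖F^m_k v‖²/(‖F^m_k u_k‖²·e^{3|m|ε}))^{1/2}`. -/
def nrmK {d : ℕ} (P : ℤ → (EuclideanSpace ℝ (Fin d) ≃L[ℝ] EuclideanSpace ℝ (Fin d)))
    (u : EuclideanSpace ℝ (Fin d)) (ε : ℝ) (k : ℤ) (v : EuclideanSpace ℝ (Fin d)) : ℝ :=
  Real.sqrt (∑' m : ℤ, nrmTerm P u ε k v m)

theorem stmt_7 {d : ℕ}
    (F P : ℤ → (EuclideanSpace ℝ (Fin d) ≃L[ℝ] EuclideanSpace ℝ (Fin d)))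
    (hP0 : P 0 = ContinuousLinearEquiv.refl ℝ (EuclideanSpace ℝ (Fin d)))
    (hP : ∀ k, P (k + 1) = (P k).trans (F k))
    (u : EuclideanSpace ℝ (Fin d)) (hu : ‖u‖ = 1)
    (ε Cε : ℝ) (hε : 0 < ε)
    (hK : ∀ k n : ℤ,
      ‖(coc P k n : EuclideanSpace ℝ (Fin d) →L[ℝ] EuclideanSpace ℝ (Fin d))‖ *
        ‖((coc P k n).symm : EuclideanSpace ℝ (Fin d) →L[ℝ] EuclideanSpace ℝ (Fin d))‖ ≤
        Cε * Real.exp (ε * |(n : ℝ)|)) :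
    -- the series converges
    (∀ (k : ℤ) (v : EuclideanSpace ℝ (Fin d)), Summable (nrmTerm P u ε k v)) ∧
    -- `‖·‖_k` is a norm at each position `k`
    (∀ (k : ℤ) (v : EuclideanSpace ℝ (Fin d)), nrmK P u ε k v = 0 ↔ v = 0) ∧
    (∀ (k : ℤ) (c : ℝ) (v : EuclideanSpace ℝ (Fin d)),
      nrmK P u ε k (c • v) = |c| * nrmK P u ε k v) ∧
    (∀ (k : ℤ) (v w : EuclideanSpace ℝ (Fin d)),
      nrmK P u ε k (v + w) ≤ nrmK P u ε k v + nrmK P u ε k w) ∧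
    -- comparison with the background norm
    (∃ Mε : ℝ, ∀ (k : ℤ) (v : EuclideanSpace ℝ (Fin d)),
      ‖v‖ ≤ nrmK P u ε k v ∧ nrmK P u ε k v ≤ Mε * ‖v‖) := by
  
  have hu0 : u ≠ 0 := by
    intro h; rw [h, norm_zero] at hu; norm_num at hu
  haveI : Nontrivial (EuclideanSpace ℝ (Fin d)) := nontrivial_of_ne u 0 hu0
  -- unit vectors
  have huvec : ∀ k, ‖uvec P u k‖ = 1 := by
    intro k
    have hPu : P k u ≠ 0 := fun h => hu0 (by simpa using (P k).map_eq_zero_iff.mp h)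
    rw [uvec, norm_smul, norm_inv, norm_norm,
      inv_mul_cancel₀ (norm_ne_zero_iff.mpr hPu)]
  have huvec0 : ∀ k, uvec P u k ≠ 0 := by
    intro k h
    have := huvec k
    rw [h, norm_zero] at this
    norm_num at this
  have hAu : ∀ k m : ℤ, 0 < ‖coc P k m (uvec P u k)‖ := by
    intro k m
    rw [norm_pos_iff]
    exact fun h => huvec0 k (by simpa using (coc P k m).map_eq_zero_iff.mp h)
  have hterm_nonneg : ∀ (k : ℤ) (v) (m : ℤ), 0 ≤ nrmTerm P u ε k v m := by
    intro k v m
    unfold nrmTerm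
    positivity
  -- the cocycle at time 0 is the identity
  have hcoc0 : ∀ (k : ℤ) (x : EuclideanSpace ℝ (Fin d)), coc P k 0 x = x := by
    intro k x
    simp [coc, ContinuousLinearEquiv.trans_apply]
  -- Cε ≥ 1
  have hCε : 1 ≤ Cε := by
    have h0 : coc P (0:ℤ) 0 = ContinuousLinearEquiv.refl ℝ (EuclideanSpace ℝ (Fin d)) := by
      refine ContinuousLinearEquiv.ext (funext fun x => ?_)
      simpa using hcoc0 0 x
    have := hK 0 0
    rw [h0] at this
    simpa using this
  -- key distortion bound on the terms
  have hbound : ∀ (k : ℤ) (v) (m : ℤ),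
      nrmTerm P u ε k v m ≤ (Cε ^ 2 * ‖v‖ ^ 2) * Real.exp (-(ε * |(m : ℝ)|)) := by
    intro k v m
    set A := coc P k m with hA
    set a := ‖A v‖ with ha
    set b := ‖A (uvec P u k)‖ with hb
    set N := ‖(A : EuclideanSpace ℝ (Fin d) →L[ℝ] EuclideanSpace ℝ (Fin d))‖ with hN
    set Ni := ‖(A.symm : EuclideanSpace ℝ (Fin d) →L[ℝ] EuclideanSpace ℝ (Fin d))‖ with hNi
    have hb0 : 0 < b := hAu k m
    have haN : a ≤ N * ‖v‖ := (A : EuclideanSpace ℝ (Fin d) →L[ℝ] EuclideanSpace ℝ (Fin d)).le_opNorm v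
    have h1b : 1 ≤ Ni * b := by
      have h := (A.symm : EuclideanSpace ℝ (Fin d) →L[ℝ] EuclideanSpace ℝ (Fin d)).le_opNorm
        (A (uvec P u k))
      simpa [huvec k] using h
    have hk' : N * Ni ≤ Cε * Real.exp (ε * |(m : ℝ)|) := hK k m
    have hNnn : 0 ≤ N := norm_nonneg _
    have hNi0 : 0 ≤ Ni := norm_nonneg _
    have hvnn : (0:ℝ) ≤ ‖v‖ := norm_nonneg _
    have hann : 0 ≤ a := norm_nonneg _
    have hE : 0 < Real.exp (3 * |(m : ℝ)| * ε) := Real.exp_pos _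
    have h1 : a ≤ (Cε * Real.exp (ε * |(m : ℝ)|)) * b * ‖v‖ := by
      calc a ≤ N * ‖v‖ := haN
        _ ≤ (N * (Ni * b)) * ‖v‖ := by nlinarith
        _ = (N * Ni) * b * ‖v‖ := by ring
        _ ≤ (Cε * Real.exp (ε * |(m : ℝ)|)) * b * ‖v‖ := by
            apply mul_le_mul_of_nonneg_right _ hvnn
            exact mul_le_mul_of_nonneg_right hk' hb0.le
    have h2 : a ^ 2 ≤ ((Cε * Real.exp (ε * |(m : ℝ)|)) * b * ‖v‖) ^ 2 :=
      pow_le_pow_left₀ hann h1 2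
    have hexp : Real.exp (ε * |(m : ℝ)|) ^ 2 / Real.exp (3 * |(m : ℝ)| * ε)
        = Real.exp (-(ε * |(m : ℝ)|)) := by
      rw [sq, ← Real.exp_add, ← Real.exp_sub]
      ring_nf
    calc nrmTerm P u ε k v m = a ^ 2 / (b ^ 2 * Real.exp (3 * |(m : ℝ)| * ε)) := rfl
      _ ≤ ((Cε * Real.exp (ε * |(m : ℝ)|)) * b * ‖v‖) ^ 2
            / (b ^ 2 * Real.exp (3 * |(m : ℝ)| * ε)) := by
          apply div_le_div_of_nonneg_right h2 ?_ |>.trans_eq rfl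
          positivity
      _ = (Cε ^ 2 * ‖v‖ ^ 2) * (Real.exp (ε * |(m : ℝ)|) ^ 2 / Real.exp (3 * |(m : ℝ)| * ε)) := by
          field_simp
      _ = (Cε ^ 2 * ‖v‖ ^ 2) * Real.exp (-(ε * |(m : ℝ)|)) := by rw [hexp]
  -- summability of the exponential majorant
  have hSumExp : Summable (fun m : ℤ => Real.exp (-(ε * |(m : ℝ)|))) := by
    have hlt : Real.exp (-ε) < 1 := Real.exp_lt_one_iff.mpr (by linarith)
    have h0 : (0:ℝ) ≤ Real.exp (-ε) := (Real.exp_pos _).le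
    have hgeo : Summable (fun n : ℕ => Real.exp (-ε) ^ n) :=
      summable_geometric_of_lt_one h0 hlt
    have key : ∀ m : ℤ, Real.exp (-(ε * |(m : ℝ)|)) = Real.exp (-ε) ^ m.natAbs := by
      intro m
      rw [← Real.exp_nat_mul]
      congr 1
      rw [Nat.cast_natAbs, Int.cast_abs]
      ring
    rw [funext key]
    apply Summable.of_nat_of_neg
    · simpa using hgeo
    · simpa using hgeo
  -- summability of the series
  have hSum : ∀ (k : ℤ) (v : EuclideanSpace ℝ (Fin d)), Summable (nrmTerm P u ε k v) := by
    intro k v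
    exact Summable.of_nonneg_of_le (hterm_nonneg k v) (hbound k v) (hSumExp.mul_left _)
  -- the term at m = 0
  have hterm0 : ∀ (k : ℤ) (v : EuclideanSpace ℝ (Fin d)), nrmTerm P u ε k v 0 = ‖v‖ ^ 2 := by
    intro k v
    rw [nrmTerm, hcoc0, hcoc0, huvec k]
    norm_num
  -- lower bound
  have hlow : ∀ (k : ℤ) (v : EuclideanSpace ℝ (Fin d)), ‖v‖ ≤ nrmK P u ε k v := by
    intro k v
    have h0 : ‖v‖ ^ 2 ≤ ∑' m : ℤ, nrmTerm P u ε k v m := by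
      rw [← hterm0 k v]
      exact Summable.le_tsum (hSum k v) 0 (fun m _ => hterm_nonneg k v m)
    calc ‖v‖ = Real.sqrt (‖v‖ ^ 2) := (Real.sqrt_sq (norm_nonneg v)).symm
      _ ≤ nrmK P u ε k v := Real.sqrt_le_sqrt h0
  refine ⟨hSum, ?_, ?_, ?_, ?_⟩
  · -- norm zero iff zero
    intro k v
    constructor
    · intro h
      have := hlow k v
      rw [h] at this
      exact norm_le_zero_iff.mp this
    · intro h
      subst h
      simp only [nrmK, nrmTerm, map_zero, norm_zero]
      simp
  · -- homogeneity
    intro k c v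
    have hterm : ∀ m : ℤ, nrmTerm P u ε k (c • v) m = c ^ 2 * nrmTerm P u ε k v m := by
      intro m
      simp only [nrmTerm, map_smul, norm_smul, Real.norm_eq_abs, mul_pow, sq_abs]
      ring
    rw [nrmK, funext hterm, tsum_mul_left, nrmK, Real.sqrt_mul (sq_nonneg c),
      Real.sqrt_sq_eq_abs]
  · -- triangle inequality
    intro k v w
    set f : ℤ → ℝ := fun m => Real.sqrt (nrmTerm P u ε k v m) with hf
    set g : ℤ → ℝ := fun m => Real.sqrt (nrmTerm P u ε k w m) with hg
    have hf2 : ∀ m, f m ^ 2 = nrmTerm P u ε k v m := fun m =>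
      Real.sq_sqrt (hterm_nonneg k v m)
    have hg2 : ∀ m, g m ^ 2 = nrmTerm P u ε k w m := fun m =>
      Real.sq_sqrt (hterm_nonneg k w m)
    have hsqrtT : ∀ (x : EuclideanSpace ℝ (Fin d)) (m : ℤ),
        Real.sqrt (nrmTerm P u ε k x m)
          = ‖coc P k m x‖ / Real.sqrt (‖coc P k m (uvec P u k)‖ ^ 2
              * Real.exp (3 * |(m : ℝ)| * ε)) := by
      intro x m
      rw [nrmTerm, Real.sqrt_div (sq_nonneg _), Real.sqrt_sq (norm_nonneg _)]
    have htm : ∀ m : ℤ, nrmTerm P u ε k (v + w) m ≤ (f m + g m) ^ 2 := by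
      intro m
      have hstep : Real.sqrt (nrmTerm P u ε k (v + w) m) ≤ f m + g m := by
        rw [hsqrtT (v + w) m, hf, hg]
        simp only
        rw [hsqrtT v m, hsqrtT w m, ← add_div]
        gcongr
        rw [map_add]
        exact norm_add_le _ _
      calc nrmTerm P u ε k (v + w) m
          = Real.sqrt (nrmTerm P u ε k (v + w) m) ^ 2 :=
            (Real.sq_sqrt (hterm_nonneg k (v + w) m)).symm
        _ ≤ (f m + g m) ^ 2 := pow_le_pow_left₀ (Real.sqrt_nonneg _) hstep 2
    have hfS : Summable (fun m => f m ^ 2) := by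
      rw [funext hf2]; exact hSum k v
    have hgS : Summable (fun m => g m ^ 2) := by
      rw [funext hg2]; exact hSum k w
    have hfgS : Summable (fun m => (f m + g m) ^ 2) := by
      apply Summable.of_nonneg_of_le (fun m => sq_nonneg _)
        (fun m => ?_) ((hfS.add hgS).mul_left 2)
      have := sq_nonneg (f m - g m)
      nlinarith
    calc nrmK P u ε k (v + w)
        ≤ Real.sqrt (∑' m : ℤ, (f m + g m) ^ 2) := by
          apply Real.sqrt_le_sqrt
          exact Summable.tsum_le_tsum htm (hSum k (v + w)) hfgS
      _ ≤ Real.sqrt (∑' m : ℤ, f m ^ 2) + Real.sqrt (∑' m : ℤ, g m ^ 2) :=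
          l2_tri f g hfS hgS
      _ = nrmK P u ε k v + nrmK P u ε k w := by
          rw [nrmK, nrmK, tsum_congr hf2, tsum_congr hg2]
  · -- equivalence with the background norm
    refine ⟨Cε * Real.sqrt (∑' m : ℤ, Real.exp (-(ε * |(m : ℝ)|))), fun k v => ⟨hlow k v, ?_⟩⟩
    have hupper : ∑' m : ℤ, nrmTerm P u ε k v m
        ≤ (Cε * ‖v‖) ^ 2 * ∑' m : ℤ, Real.exp (-(ε * |(m : ℝ)|)) := by
      have := Summable.tsum_le_tsum (hbound k v) (hSum k v) (hSumExp.mul_left _)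
      rw [tsum_mul_left] at this
      calc ∑' m : ℤ, nrmTerm P u ε k v m
          ≤ (Cε ^ 2 * ‖v‖ ^ 2) * ∑' m : ℤ, Real.exp (-(ε * |(m : ℝ)|)) := this
        _ = (Cε * ‖v‖) ^ 2 * ∑' m : ℤ, Real.exp (-(ε * |(m : ℝ)|)) := by ring
    calc nrmK P u ε k v ≤ Real.sqrt ((Cε * ‖v‖) ^ 2 * ∑' m : ℤ, Real.exp (-(ε * |(m : ℝ)|))) :=
          Real.sqrt_le_sqrt hupper
      _ = (Cε * ‖v‖) * Real.sqrt (∑' m : ℤ, Real.exp (-(ε * |(m : ℝ)|))) := by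
          rw [Real.sqrt_mul (sq_nonneg _), Real.sqrt_sq (by positivity)]
      _ = Cε * Real.sqrt (∑' m : ℤ, Real.exp (-(ε * |(m : ℝ)|))) * ‖v‖ := by ring
end
end

section
/- With the norms ‖·‖_k of the previous construction (‖v‖_k² = Σ_m ‖F^m_k(v)‖²/(‖F^m_k(u_k)‖²·e^{3|m|ε})), for every v ∈ ℝ^d one has e^{−3ε/2}·‖F_k(u_k)‖·‖v‖_k ≤ ‖F_k(v)‖_{k+1} ≤ e^{3ε/2}·‖F_k(u_k)‖·‖v‖_k. Consequently, for any unit vectors v, w (in the ‖·‖_k norm), e^{−3ε} ≤ ‖F_k(w)‖_{k+1}/‖F_k(v)‖_{k+1} ≤ e^{3ε}. -/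
noncomputable section

lemma Fu_pos {d : ℕ} (F P : ℤ → (EuclideanSpace ℝ (Fin d) ≃L[ℝ] EuclideanSpace ℝ (Fin d)))
    (u : EuclideanSpace ℝ (Fin d)) (hu : ‖u‖ = 1) (k : ℤ) :
    0 < ‖F k (uvec P u k)‖ := by
  have hu0 : u ≠ 0 := by intro h; rw [h] at hu; simp at hu
  have hPu : P k u ≠ 0 := fun h => hu0 (by simpa using (P k).injective (by simpa using h))
  have : uvec P u k ≠ 0 := by
    rw [uvec]
    simp [hPu, norm_eq_zero.not.2 hPu, smul_eq_zero, inv_eq_zero]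
  rw [norm_pos_iff]
  exact fun h => this ((F k).injective (by simpa using h))

lemma coc_apply {d : ℕ} (P : ℤ → (EuclideanSpace ℝ (Fin d) ≃L[ℝ] EuclideanSpace ℝ (Fin d)))
    (k n : ℤ) (x : EuclideanSpace ℝ (Fin d)) : coc P k n x = P (k+n) ((P k).symm x) := rfl

lemma coc_succ {d : ℕ} {F P : ℤ → (EuclideanSpace ℝ (Fin d) ≃L[ℝ] EuclideanSpace ℝ (Fin d))}
    (hP : ∀ k, P (k + 1) = (P k).trans (F k)) (k m : ℤ) (x : EuclideanSpace ℝ (Fin d)) :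
    coc P (k+1) m (F k x) = coc P k (m+1) x := by
  rw [coc_apply, coc_apply, show k+1+m = k+(m+1) by ring]
  congr 1
  rw [hP k]
  simp

lemma coc_uvec {d : ℕ} (P : ℤ → (EuclideanSpace ℝ (Fin d) ≃L[ℝ] EuclideanSpace ℝ (Fin d)))
    (u : EuclideanSpace ℝ (Fin d)) (k n : ℤ) :
    coc P k n (uvec P u k) = ‖P k u‖⁻¹ • P (k+n) u := by
  rw [uvec, map_smul, coc_apply]
  simp

lemma tsum_squeeze {f g : ℤ → ℝ} (hf : ∀ n, 0 ≤ f n) (hg : ∀ n, 0 ≤ g n)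
    {c1 c2 : ℝ} (hc1 : 0 < c1) (h1 : ∀ n, c1 * f n ≤ g n) (h2 : ∀ n, g n ≤ c2 * f n) :
    c1 * ∑' n, f n ≤ ∑' n, g n ∧ ∑' n, g n ≤ c2 * ∑' n, f n := by
  by_cases hS : Summable f
  · have hg_sum : Summable g := Summable.of_nonneg_of_le hg h2 (hS.mul_left c2)
    constructor
    · calc c1 * ∑' n, f n = ∑' n, c1 * f n := tsum_mul_left.symm
        _ ≤ ∑' n, g n := Summable.tsum_le_tsum h1 (hS.mul_left c1) hg_sum
    · calc ∑' n, g n ≤ ∑' n, c2 * f n := Summable.tsum_le_tsum h2 hg_sum (hS.mul_left c2)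
        _ = c2 * ∑' n, f n := tsum_mul_left
  · have hgS : ¬ Summable g := by
      intro hgs
      refine hS (Summable.of_nonneg_of_le hf (fun n => ?_) (hgs.mul_left c1⁻¹))
      rw [le_inv_mul_iff₀ hc1]
      exact h1 n
    rw [tsum_eq_zero_of_not_summable hS, tsum_eq_zero_of_not_summable hgS]
    simp


lemma main_bound {d : ℕ}
    (F P : ℤ → (EuclideanSpace ℝ (Fin d) ≃L[ℝ] EuclideanSpace ℝ (Fin d)))
    (hP : ∀ k, P (k + 1) = (P k).trans (F k))
    (u : EuclideanSpace ℝ (Fin d)) (hu : ‖u‖ = 1)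
    (ε : ℝ) (hε : 0 < ε) (k : ℤ) (v : EuclideanSpace ℝ (Fin d)) :
    Real.exp (-(3 * ε) / 2) * ‖F k (uvec P u k)‖ * nrmK P u ε k v ≤
        nrmK P u ε (k + 1) (F k v) ∧
      nrmK P u ε (k + 1) (F k v) ≤
        Real.exp (3 * ε / 2) * ‖F k (uvec P u k)‖ * nrmK P u ε k v := by
  have hu0 : u ≠ 0 := by intro h; rw [h] at hu; simp at hu
  have hPu : ∀ j : ℤ, P j u ≠ 0 := fun j h => hu0 (by simpa using (P j).injective (by simpa using h))
  have hPn : ∀ j : ℤ, 0 < ‖P j u‖ := fun j => norm_pos_iff.2 (hPu j)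
  set a := ‖P k u‖ with ha
  set b := ‖P (k+1) u‖ with hb
  have ha0 : 0 < a := hPn k
  have hb0 : 0 < b := hPn (k+1)
  -- norm of F k (uvec P u k)
  have hFu : ‖F k (uvec P u k)‖ = b / a := by
    have : F k (uvec P u k) = a⁻¹ • P (k+1) u := by
      rw [uvec, map_smul, hP k]; rfl
    rw [this, norm_smul, norm_inv, Real.norm_eq_abs, abs_of_pos ha0, ← hb]
    ring
  have hFu0 : 0 < ‖F k (uvec P u k)‖ := by rw [hFu]; positivity
  -- denominators
  have hden : ∀ m : ℤ, ‖coc P (k+1) m (uvec P u (k+1))‖ =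
      (a / b) * ‖coc P k (m+1) (uvec P u k)‖ := by
    intro m
    rw [coc_uvec, coc_uvec, norm_smul, norm_smul, norm_inv, norm_inv,
      Real.norm_eq_abs, Real.norm_eq_abs, abs_of_pos ha0, abs_of_pos hb0,
      show k+1+m = k+(m+1) by ring]
    field_simp
  have hDpos : ∀ m : ℤ, 0 < ‖coc P k (m+1) (uvec P u k)‖ := by
    intro m
    rw [coc_uvec, norm_smul, norm_inv, Real.norm_eq_abs, abs_of_pos ha0]
    exact mul_pos (inv_pos.2 ha0) (hPn _)
  -- term identity
  have key : ∀ m : ℤ, nrmTerm P u ε (k+1) (F k v) m =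
      (‖F k (uvec P u k)‖^2 * Real.exp (3*(|((m:ℝ)+1)| - |(m:ℝ)|)*ε)) *
        nrmTerm P u ε k v (m+1) := by
    intro m
    unfold nrmTerm
    rw [coc_succ hP, hden m, hFu]
    have hE : Real.exp (3*(|((m:ℝ)+1)| - |(m:ℝ)|)*ε) =
        Real.exp (3*|((m:ℝ)+1)| * ε) / Real.exp (3*|(m:ℝ)| * ε) := by
      rw [← Real.exp_sub]
      congr 1
      ring
    push_cast
    rw [hE]
    have hD := (hDpos m).ne'
    have hE1 := (Real.exp_pos (3*|((m:ℝ)+1)| * ε)).ne'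
    have hE2 := (Real.exp_pos (3*|(m:ℝ)| * ε)).ne'
    field_simp
  -- bounds per term
  have hterm_nonneg : ∀ (j : ℤ) (x : EuclideanSpace ℝ (Fin d)) (m : ℤ),
      0 ≤ nrmTerm P u ε j x m := by
    intro j x m; unfold nrmTerm; positivity
  set c1 : ℝ := ‖F k (uvec P u k)‖^2 * Real.exp (-(3*ε)) with hc1def
  set c2 : ℝ := ‖F k (uvec P u k)‖^2 * Real.exp (3*ε) with hc2def
  have hc1 : 0 < c1 := by rw [hc1def]; positivity
  have hexp_bound : ∀ m : ℤ, Real.exp (-(3*ε)) ≤ Real.exp (3*(|((m:ℝ)+1)| - |(m:ℝ)|)*ε)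
      ∧ Real.exp (3*(|((m:ℝ)+1)| - |(m:ℝ)|)*ε) ≤ Real.exp (3*ε) := by
    intro m
    have h1 : |((m:ℝ)+1)| - |(m:ℝ)| ≤ 1 := by
      have := abs_sub_abs_le_abs_sub ((m:ℝ)+1) (m:ℝ); simpa using this
    have h2 : -1 ≤ |((m:ℝ)+1)| - |(m:ℝ)| := by
      have := abs_sub_abs_le_abs_sub (m:ℝ) ((m:ℝ)+1)
      simp only [show (m:ℝ) - ((m:ℝ)+1) = -1 by ring] at this
      rw [abs_neg, abs_one] at this; linarith
    constructor <;> apply Real.exp_le_exp.2 <;> nlinarith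
  have hsq := tsum_squeeze (f := fun m => nrmTerm P u ε k v (m+1))
      (g := fun m => nrmTerm P u ε (k+1) (F k v) m)
      (c1 := c1) (c2 := c2)
      (fun m => hterm_nonneg _ _ _) (fun m => hterm_nonneg _ _ _) hc1
      (fun m => by
        rw [key m, hc1def]
        exact mul_le_mul_of_nonneg_right
          (mul_le_mul_of_nonneg_left (hexp_bound m).1 (sq_nonneg _))
          (hterm_nonneg k v (m+1)))
      (fun m => by
        rw [key m, hc2def]
        exact mul_le_mul_of_nonneg_right
          (mul_le_mul_of_nonneg_left (hexp_bound m).2 (sq_nonneg _))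
          (hterm_nonneg k v (m+1)))
  have hreindex : ∑' m : ℤ, nrmTerm P u ε k v (m+1) = ∑' m : ℤ, nrmTerm P u ε k v m :=
    (Equiv.addRight (1:ℤ)).tsum_eq (nrmTerm P u ε k v)
  rw [hreindex] at hsq
  set S := ∑' m : ℤ, nrmTerm P u ε k v m with hS
  have hS0 : 0 ≤ S := tsum_nonneg (fun m => hterm_nonneg _ _ _)
  have hsqrt1 : Real.sqrt (c1 * S) = Real.exp (-(3*ε)/2) * ‖F k (uvec P u k)‖ * Real.sqrt S := by
    rw [hc1def, Real.sqrt_mul (by positivity), Real.sqrt_mul (by positivity),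
      Real.sqrt_sq hFu0.le, show -(3*ε) = -(3*ε)/2 + -(3*ε)/2 by ring, Real.exp_add,
      Real.sqrt_mul_self (Real.exp_pos _).le]
    ring
  have hsqrt2 : Real.sqrt (c2 * S) = Real.exp ((3*ε)/2) * ‖F k (uvec P u k)‖ * Real.sqrt S := by
    rw [hc2def, Real.sqrt_mul (by positivity), Real.sqrt_mul (by positivity),
      Real.sqrt_sq hFu0.le, show (3*ε) = (3*ε)/2 + (3*ε)/2 by ring, Real.exp_add,
      Real.sqrt_mul_self (Real.exp_pos _).le]
    ring
  constructor
  · calc Real.exp (-(3*ε)/2) * ‖F k (uvec P u k)‖ * nrmK P u ε k v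
        = Real.sqrt (c1 * S) := by rw [hsqrt1, nrmK, ← hS]
      _ ≤ nrmK P u ε (k+1) (F k v) := Real.sqrt_le_sqrt hsq.1
  · calc nrmK P u ε (k+1) (F k v)
        ≤ Real.sqrt (c2 * S) := Real.sqrt_le_sqrt hsq.2
      _ = Real.exp ((3*ε)/2) * ‖F k (uvec P u k)‖ * nrmK P u ε k v := by
          rw [hsqrt2, nrmK, ← hS]

theorem stmt_8 {d : ℕ}
    (F P : ℤ → (EuclideanSpace ℝ (Fin d) ≃L[ℝ] EuclideanSpace ℝ (Fin d)))
    (hP0 : P 0 = ContinuousLinearEquiv.refl ℝ (EuclideanSpace ℝ (Fin d)))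
    (hP : ∀ k, P (k + 1) = (P k).trans (F k))
    (u : EuclideanSpace ℝ (Fin d)) (hu : ‖u‖ = 1)
    (ε Cε : ℝ) (hε : 0 < ε)
    (hK : ∀ k n : ℤ,
      ‖(coc P k n : EuclideanSpace ℝ (Fin d) →L[ℝ] EuclideanSpace ℝ (Fin d))‖ *
        ‖((coc P k n).symm : EuclideanSpace ℝ (Fin d) →L[ℝ] EuclideanSpace ℝ (Fin d))‖ ≤
        Cε * Real.exp (ε * |(n : ℝ)|)) :
    -- the two-sided bound on the image of any `v`
    (∀ (k : ℤ) (v : EuclideanSpace ℝ (Fin d)),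
      Real.exp (-(3 * ε) / 2) * ‖F k (uvec P u k)‖ * nrmK P u ε k v ≤
          nrmK P u ε (k + 1) (F k v) ∧
        nrmK P u ε (k + 1) (F k v) ≤
          Real.exp (3 * ε / 2) * ‖F k (uvec P u k)‖ * nrmK P u ε k v) ∧
    -- consequence for `‖·‖_k`-unit vectors
    (∀ (k : ℤ) (v w : EuclideanSpace ℝ (Fin d)),
      nrmK P u ε k v = 1 → nrmK P u ε k w = 1 →
      Real.exp (-(3 * ε)) ≤ nrmK P u ε (k + 1) (F k w) / nrmK P u ε (k + 1) (F k v) ∧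
        nrmK P u ε (k + 1) (F k w) / nrmK P u ε (k + 1) (F k v) ≤ Real.exp (3 * ε)) := by
  have hmb := main_bound F P hP u hu ε hε
  refine ⟨hmb, ?_⟩
  intro k v w hv hw
  obtain ⟨h1v, h2v⟩ := hmb k v
  obtain ⟨h1w, h2w⟩ := hmb k w
  rw [hv, mul_one] at h1v h2v
  rw [hw, mul_one] at h1w h2w
  have hFu0 : 0 < ‖F k (uvec P u k)‖ := Fu_pos F P u hu k
  have hNv : 0 < nrmK P u ε (k+1) (F k v) :=
    lt_of_lt_of_le (by positivity) h1v
  have e1 : Real.exp (-(3*ε)) * Real.exp (3*ε/2) = Real.exp (-(3*ε)/2) := by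
    rw [← Real.exp_add]; ring_nf
  have e2 : Real.exp (3*ε) * Real.exp (-(3*ε)/2) = Real.exp (3*ε/2) := by
    rw [← Real.exp_add]; ring_nf
  constructor
  · rw [le_div_iff₀ hNv]
    nlinarith [Real.exp_pos (-(3*ε)), Real.exp_pos (3*ε/2), Real.exp_pos (-(3*ε)/2)]
  · rw [div_le_iff₀ hNv]
    nlinarith [Real.exp_pos (3*ε), Real.exp_pos (3*ε/2), Real.exp_pos (-(3*ε)/2)]
end
end

section
/- Let σ be a conformal structure on ℝ^d represented by a symmetric positive definite matrix C with det C = 1, and let A be an invertible linear map with ‖A − Id‖ ≤ (6‖C⁻¹‖·‖C‖)⁻¹. Then dist(σ, A*(σ)) ≤ 3d·‖C⁻¹‖·‖C‖·‖A − Id‖, where A*(σ) is represented by (det AᵀA)^{−1/d}·AᵀCA and dist is the GL(d,ℝ)-invariant metric on the space of determinant-1 positive definite symmetric matrices satisfying dist(Id, C') ≤ (d/2)·max{log‖C'‖, log‖C'⁻¹‖}. -/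
open Matrix

noncomputable section
set_option maxHeartbeats 4000000
set_option synthInstance.maxHeartbeats 1000000
open scoped Matrix.Norms.L2Operator
variable {d : ℕ}

/-- The `ℓ²` operator norm of a real `d×d` matrix. -/
def opNorm {d : ℕ} (M : Matrix (Fin d) (Fin d) ℝ) : ℝ :=
  ‖Matrix.toEuclideanCLM (𝕜 := ℝ) M‖

lemma opNorm_eq (M : Matrix (Fin d) (Fin d) ℝ) : opNorm M = ‖M‖ := rfl

lemma opNorm_nonneg' (M : Matrix (Fin d) (Fin d) ℝ) : 0 ≤ opNorm M := by
  rw [opNorm_eq]; exact norm_nonneg _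

lemma opNorm_mul_le' (M N : Matrix (Fin d) (Fin d) ℝ) : opNorm (M * N) ≤ opNorm M * opNorm N := by
  rw [opNorm_eq, opNorm_eq, opNorm_eq]; exact Matrix.l2_opNorm_mul M N

lemma opNorm_add_le' (M N : Matrix (Fin d) (Fin d) ℝ) : opNorm (M + N) ≤ opNorm M + opNorm N := by
  rw [opNorm_eq, opNorm_eq, opNorm_eq]; exact norm_add_le M N

lemma opNorm_neg' (M : Matrix (Fin d) (Fin d) ℝ) : opNorm (-M) = opNorm M := by
  rw [opNorm_eq, opNorm_eq]; exact norm_neg M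

lemma conjT_eq_transpose (M : Matrix (Fin d) (Fin d) ℝ) : Mᴴ = Mᵀ := by
  ext i j; simp [conjTranspose]

lemma opNorm_transpose' (M : Matrix (Fin d) (Fin d) ℝ) : opNorm Mᵀ = opNorm M := by
  rw [opNorm_eq, opNorm_eq, ← conjT_eq_transpose, Matrix.l2_opNorm_conjTranspose]

lemma opNorm_self_mul (M : Matrix (Fin d) (Fin d) ℝ) : opNorm (Mᵀ * M) = opNorm M * opNorm M := by
  rw [opNorm_eq, opNorm_eq, ← conjT_eq_transpose, Matrix.l2_opNorm_conjTranspose_mul_self]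

lemma opNorm_one' (hd : 0 < d) : opNorm (1 : Matrix (Fin d) (Fin d) ℝ) = 1 := by
  have h := Matrix.l2_opNorm_conjTranspose_mul_self (1 : Matrix (Fin d) (Fin d) ℝ)
  rw [conjT_eq_transpose, transpose_one, mul_one] at h
  have h1 : (1 : Matrix (Fin d) (Fin d) ℝ) ≠ 0 := fun hh => by
    have := congrFun (congrFun hh ⟨0, hd⟩) ⟨0, hd⟩
    simp at this
  have h2 : ‖(1 : Matrix (Fin d) (Fin d) ℝ)‖ ≠ 0 := by simpa using h1
  rw [opNorm_eq]
  exact (mul_left_cancel₀ h2 (by rw [← h, mul_one])).symm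

lemma opNorm_smul' (c : ℝ) (M : Matrix (Fin d) (Fin d) ℝ) : opNorm (c • M) = |c| * opNorm M := by
  rw [opNorm_eq, opNorm_eq, norm_smul, Real.norm_eq_abs]

lemma abs_le_opNorm_of_mulVec {M : Matrix (Fin d) (Fin d) ℝ} {v : EuclideanSpace ℝ (Fin d)} {t : ℝ}
    (hv : ‖v‖ = 1) (h : M *ᵥ ⇑v = t • ⇑v) : |t| ≤ opNorm M := by
  have h2 := Matrix.l2_opNorm_mulVec M v
  rw [hv, mul_one] at h2
  rw [opNorm_eq]
  calc |t| = ‖(EuclideanSpace.equiv (Fin d) ℝ).symm (M *ᵥ ⇑v)‖ := by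
            rw [h, _root_.map_smul, norm_smul, Real.norm_eq_abs,
              show (EuclideanSpace.equiv (Fin d) ℝ).symm ⇑v = v from rfl, hv, mul_one]
    _ ≤ ‖M‖ := h2

lemma abs_eigenvalue_le {M : Matrix (Fin d) (Fin d) ℝ} (hM : M.IsHermitian) (i : Fin d) :
    |hM.eigenvalues i| ≤ opNorm M :=
  abs_le_opNorm_of_mulVec (hM.eigenvectorBasis.orthonormal.1 i) (hM.mulVec_eigenvectorBasis i)

lemma eigenvalue_inv_le {M : Matrix (Fin d) (Fin d) ℝ} (hM : M.PosDef) (i : Fin d) :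
    (hM.1.eigenvalues i)⁻¹ ≤ opNorm M⁻¹ := by
  have ht : 0 < hM.1.eigenvalues i := hM.eigenvalues_pos i
  have hdet : IsUnit M.det := hM.det_pos.ne'.isUnit
  have hmv := hM.1.mulVec_eigenvectorBasis i
  have h0 : M⁻¹ *ᵥ (M *ᵥ ⇑(hM.1.eigenvectorBasis i)) = ⇑(hM.1.eigenvectorBasis i) := by
    rw [mulVec_mulVec, Matrix.nonsing_inv_mul M hdet, one_mulVec]
  rw [hmv, mulVec_smul] at h0
  have h1 : M⁻¹ *ᵥ ⇑(hM.1.eigenvectorBasis i) =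
      (hM.1.eigenvalues i)⁻¹ • ⇑(hM.1.eigenvectorBasis i) := by
    have h0' := congrArg (fun y => (hM.1.eigenvalues i)⁻¹ • y) h0
    simpa only [smul_smul, inv_mul_cancel₀ ht.ne', one_smul] using h0'
  have h2 := abs_le_opNorm_of_mulVec (hM.1.eigenvectorBasis.orthonormal.1 i) h1
  exact (le_abs_self _).trans h2

lemma posDef_smul {M : Matrix (Fin d) (Fin d) ℝ} (hM : M.PosDef) {c : ℝ} (hc : 0 < c) :
    (c • M).PosDef := by
  refine Matrix.PosDef.of_dotProduct_mulVec_pos ?_ (fun x hx => ?_)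
  · show (c • M)ᴴ = c • M
    rw [conjTranspose_smul, hM.1, star_trivial]
  · rw [smul_mulVec, dotProduct_smul]
    exact mul_pos hc (hM.dotProduct_mulVec_pos hx)

lemma posDef_conj {C : Matrix (Fin d) (Fin d) ℝ} (hC : C.PosDef) {B : Matrix (Fin d) (Fin d) ℝ}
    (hB : IsUnit B.det) : (Bᵀ * C * B).PosDef := by
  rw [← conjT_eq_transpose]
  refine Matrix.PosDef.of_dotProduct_mulVec_pos (isHermitian_conjTranspose_mul_mul B hC.1) (fun x hx => ?_)
  have hinj : Function.Injective (B.mulVec) :=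
    mulVec_injective_iff_isUnit.mpr ((Matrix.isUnit_iff_isUnit_det B).mpr hB)
  have hBx : B *ᵥ x ≠ 0 := fun h0 => hx (hinj (h0.trans (Matrix.mulVec_zero B).symm))
  simpa only [star_mulVec, dotProduct_mulVec, vecMul_vecMul] using hC.dotProduct_mulVec_pos hBx

/-- The distance from `Id` in the invariant metric on determinant-one positive definite
symmetric matrices: `dist(Id, C') = (√d/2)·(Σᵢ (log λᵢ)²)^{1/2}` for eigenvalues `λᵢ`. -/
def distId {d : ℕ} (C' : Matrix (Fin d) (Fin d) ℝ) : ℝ :=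
  if h : C'.IsHermitian then
    Real.sqrt d / 2 * Real.sqrt (∑ i, (Real.log (h.eigenvalues i)) ^ 2)
  else 0

/-- If `‖A − Id‖ ≤ (6‖C⁻¹‖‖C‖)⁻¹` then `dist(σ, A*(σ)) ≤ 3d‖C⁻¹‖‖C‖‖A − Id‖`.  Here
`A*(σ)` is represented by `(det AᵀA)^{−1/d}·AᵀCA`, and the distance is computed, using
invariance, as `dist(Id, X[A*(σ)])` for any `X` of determinant one with `XᵀCX = Id`. -/
theorem stmt_9 {d : ℕ} (hd : 0 < d) (C A : Matrix (Fin d) (Fin d) ℝ)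
    (hC : C.PosDef) (hdet : C.det = 1) (hA : IsUnit A.det)
    (hclose : opNorm (A - 1) ≤ (6 * (opNorm C⁻¹ * opNorm C))⁻¹) :
    ∀ X : Matrix (Fin d) (Fin d) ℝ, X.det = 1 → Xᵀ * C * X = 1 →
      distId (((Aᵀ * A).det ^ (-(1 : ℝ) / d)) • (Xᵀ * (Aᵀ * C * A) * X)) ≤
        3 * d * (opNorm C⁻¹ * opNorm C) * opNorm (A - 1) := by
  intro X hX1 hX2
  have hd0 : (0:ℝ) < d := by exact_mod_cast hd
  set a := opNorm C⁻¹ with ha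
  set b := opNorm C with hb
  set ε := opNorm (A - 1) with hε
  have hεnn : 0 ≤ ε := opNorm_nonneg' _
  have hCu : IsUnit C.det := by rw [hdet]; exact isUnit_one
  have hXu : IsUnit X.det := by rw [hX1]; exact isUnit_one
  have hone : opNorm (1 : Matrix (Fin d) (Fin d) ℝ) = 1 := opNorm_one' hd
  have hCinvC : C⁻¹ * C = 1 := Matrix.nonsing_inv_mul C hCu
  have hκ1 : 1 ≤ a * b := by
    calc (1:ℝ) = opNorm (C⁻¹ * C) := by rw [hCinvC, hone]
    _ ≤ a * b := opNorm_mul_le' _ _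
  have hκpos : (0:ℝ) < a * b := lt_of_lt_of_le one_pos hκ1
  have hκε : a * b * ε ≤ 1/6 := by
    calc a * b * ε ≤ a * b * (6 * (a*b))⁻¹ := mul_le_mul_of_nonneg_left hclose hκpos.le
    _ = 1/6 := by rw [mul_inv, mul_left_comm (a*b), mul_inv_cancel₀ hκpos.ne', mul_one]; norm_num
  -- X facts
  have hXinv : X⁻¹ = Xᵀ * C := Matrix.inv_eq_left_inv hX2
  have h1 : X * (Xᵀ * C) = 1 := mul_eq_one_comm.mp hX2
  have hXXt : C⁻¹ = X * Xᵀ := Matrix.inv_eq_left_inv (by rw [mul_assoc]; exact h1)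
  have hCt : Cᵀ = C := by rw [← conjT_eq_transpose]; exact hC.1
  have hXiXit : (X⁻¹)ᵀ * X⁻¹ = C := by
    rw [hXinv, transpose_mul, transpose_transpose, hCt,
      mul_assoc C X (Xᵀ * C), ← mul_assoc X Xᵀ C, ← hXXt, hCinvC, mul_one]
  have hnX2 : a = opNorm X * opNorm X := by
    rw [ha, hXXt, show X * Xᵀ = (Xᵀ)ᵀ * Xᵀ by rw [transpose_transpose],
      opNorm_self_mul, opNorm_transpose']
  have hnXi2 : b = opNorm X⁻¹ * opNorm X⁻¹ := by rw [hb, ← hXiXit, opNorm_self_mul]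
  have hr1 : 1 ≤ opNorm X⁻¹ * opNorm X := by
    calc (1:ℝ) = opNorm (X⁻¹ * X) := by rw [Matrix.nonsing_inv_mul X hXu, hone]
    _ ≤ opNorm X⁻¹ * opNorm X := opNorm_mul_le' _ _
  have hrle : opNorm X⁻¹ * opNorm X ≤ a * b := by
    have hrnn : 0 ≤ opNorm X⁻¹ * opNorm X := le_trans zero_le_one hr1
    have h2 := mul_le_mul_of_nonneg_left hr1 hrnn
    rw [mul_one] at h2
    calc opNorm X⁻¹ * opNorm X ≤ (opNorm X⁻¹ * opNorm X) * (opNorm X⁻¹ * opNorm X) := h2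
    _ = a * b := by rw [hnX2, hnXi2]; ring
  -- B
  set B := X⁻¹ * A * X with hB
  have hBdet : IsUnit B.det := by
    have hBd : B.det = A.det := by
      rw [hB, det_mul, det_mul, Matrix.det_nonsing_inv, hX1, mul_one, Ring.inverse_one, one_mul]
    rw [hBd]; exact hA
  have hXiX : X⁻¹ * X = 1 := Matrix.nonsing_inv_mul X hXu
  have hB1 : B - 1 = X⁻¹ * (A - 1) * X := by
    rw [Matrix.mul_sub, Matrix.sub_mul, mul_one, hXiX, hB]
  set δ := opNorm (B - 1) with hδ
  have hδnn : 0 ≤ δ := opNorm_nonneg' _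
  have hδle : δ ≤ a * b * ε := by
    calc δ = opNorm (X⁻¹ * (A-1) * X) := by rw [hδ, hB1]
    _ ≤ opNorm (X⁻¹ * (A-1)) * opNorm X := opNorm_mul_le' _ _
    _ ≤ opNorm X⁻¹ * ε * opNorm X := by
        exact mul_le_mul_of_nonneg_right (opNorm_mul_le' _ _) (opNorm_nonneg' X)
    _ = opNorm X⁻¹ * opNorm X * ε := by ring
    _ ≤ a * b * ε := mul_le_mul_of_nonneg_right hrle hεnn
  have hδ6 : δ ≤ 1/6 := hδle.trans hκε
  have h1δ : (0:ℝ) < 1 - δ := by linarith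
  have hnB : opNorm B ≤ 1 + δ := by
    calc opNorm B = opNorm (1 + (B - 1)) := by rw [add_sub_cancel]
    _ ≤ opNorm 1 + δ := opNorm_add_le' _ _
    _ = 1 + δ := by rw [hone]
  have hBm : B * B⁻¹ = 1 := Matrix.mul_nonsing_inv B hBdet
  have hnBi : opNorm B⁻¹ ≤ (1 - δ)⁻¹ := by
    have key : B⁻¹ = 1 + (1 - B) * B⁻¹ := by
      rw [Matrix.sub_mul, one_mul, hBm]; abel
    have h2 : opNorm B⁻¹ ≤ 1 + δ * opNorm B⁻¹ := by
      calc opNorm B⁻¹ = opNorm (1 + (1-B) * B⁻¹) := by rw [← key]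
      _ ≤ opNorm 1 + opNorm ((1-B) * B⁻¹) := opNorm_add_le' _ _
      _ ≤ 1 + opNorm (1-B) * opNorm B⁻¹ := by
          rw [hone]; exact add_le_add (le_refl 1) (opNorm_mul_le' _ _)
      _ = 1 + δ * opNorm B⁻¹ := by rw [show (1 : Matrix (Fin d) (Fin d) ℝ) - B = -(B-1) by abel,
          opNorm_neg']
    rw [show ((1:ℝ)-δ)⁻¹ = 1/(1-δ) from (one_div _).symm, le_div_iff₀ h1δ]
    linarith
  -- N
  set N := Xᵀ * (Aᵀ * C * A) * X with hN
  have hNBtB : N = Bᵀ * B := by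
    rw [hN, hB]
    simp only [transpose_mul, Matrix.mul_assoc]
    rw [← Matrix.mul_assoc (X⁻¹)ᵀ X⁻¹ (A * X), hXiXit]
  have hNpos : N.PosDef := by
    rw [hN, show Xᵀ * (Aᵀ * C * A) * X = (A * X)ᵀ * C * (A * X) by
      simp only [transpose_mul, Matrix.mul_assoc]]
    exact posDef_conj hC (by rw [det_mul, hX1, mul_one]; exact hA)
  have hNdet : N.det = (Aᵀ * A).det := by
    rw [hN]
    simp only [det_mul, det_transpose, hdet, hX1]
    ring
  have hNu : IsUnit N.det := by rw [hNdet, det_mul, det_transpose]; exact hA.mul hA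
  have hμpos : ∀ i, 0 < hNpos.1.eigenvalues i := hNpos.eigenvalues_pos
  have hNn : opNorm N ≤ (1+δ) * (1+δ) := by
    calc opNorm N = opNorm (Bᵀ * B) := by rw [hNBtB]
    _ ≤ opNorm Bᵀ * opNorm B := opNorm_mul_le' _ _
    _ = opNorm B * opNorm B := by rw [opNorm_transpose']
    _ ≤ (1+δ) * (1+δ) := mul_le_mul hnB hnB (opNorm_nonneg' _) (by linarith)
  have hNi : N⁻¹ = B⁻¹ * (B⁻¹)ᵀ := by
    rw [hNBtB, Matrix.mul_inv_rev, ← Matrix.transpose_nonsing_inv]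
  have hNin : opNorm N⁻¹ ≤ (1-δ)⁻¹ * (1-δ)⁻¹ := by
    calc opNorm N⁻¹ = opNorm (B⁻¹ * (B⁻¹)ᵀ) := by rw [hNi]
    _ ≤ opNorm B⁻¹ * opNorm (B⁻¹)ᵀ := opNorm_mul_le' _ _
    _ = opNorm B⁻¹ * opNorm B⁻¹ := by rw [opNorm_transpose']
    _ ≤ (1-δ)⁻¹ * (1-δ)⁻¹ := mul_le_mul hnBi hnBi (opNorm_nonneg' _) (by positivity)
  have hμub : ∀ i, hNpos.1.eigenvalues i ≤ (1+δ) * (1+δ) := fun i =>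
    ((le_abs_self _).trans (abs_eigenvalue_le hNpos.1 i)).trans hNn
  have hμlb : ∀ i, (1-δ) * (1-δ) ≤ hNpos.1.eigenvalues i := by
    intro i
    have h1' : (hNpos.1.eigenvalues i)⁻¹ ≤ ((1-δ) * (1-δ))⁻¹ := by
      rw [mul_inv]; exact (eigenvalue_inv_le hNpos i).trans hNin
    exact (inv_le_inv₀ (hμpos i) (mul_pos h1δ h1δ)).mp h1'
  have hdetN : N.det = ∏ i, hNpos.1.eigenvalues i := by
    simpa using hNpos.1.det_eq_prod_eigenvalues
  set c := (Aᵀ * A).det ^ (-(1 : ℝ) / d) with hc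
  have hDpos : 0 < (Aᵀ * A).det := by
    rw [← hNdet, hdetN]; exact Finset.prod_pos fun i _ => hμpos i
  have hcpos : 0 < c := Real.rpow_pos_of_pos hDpos _
  have hlogc : Real.log c = (-(1 : ℝ)/d) * Real.log (Aᵀ * A).det := Real.log_rpow hDpos _
  have hp1 : (0:ℝ) < 1 + δ := by linarith
  have hPQ : Real.log (1+δ) + Real.log (1-δ) ≤ 0 := by
    have hsq : δ * δ ≤ δ * (1/6) := mul_le_mul_of_nonneg_left hδ6 hδnn
    have hprod : (1+δ)*(1-δ) = 1 - δ*δ := by ring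
    have h0 : Real.log ((1+δ)*(1-δ)) ≤ 0 :=
      Real.log_nonpos (by rw [hprod]; linarith [hsq]) (by rw [hprod]; linarith [mul_nonneg hδnn hδnn])
    rwa [Real.log_mul hp1.ne' h1δ.ne'] at h0
  have hQ0 : Real.log (1-δ) ≤ 0 := Real.log_nonpos h1δ.le (by linarith)
  have hQd : -Real.log (1-δ) ≤ (6/5)*δ := by
    have h2 := Real.log_le_sub_one_of_pos (inv_pos.mpr h1δ)
    rw [Real.log_inv] at h2
    have h3 : (1-δ)⁻¹ ≤ 1 + (6/5)*δ := by
      rw [show ((1:ℝ)-δ)⁻¹ = 1/(1-δ) from (one_div _).symm, div_le_iff₀ h1δ,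
        show (1 + 6/5*δ) * (1-δ) = 1 + δ/5 - 6/5*(δ*δ) by ring]
      have hsq : δ * δ ≤ δ * (1/6) := mul_le_mul_of_nonneg_left hδ6 hδnn
      linarith [hsq]
    linarith
  have hlogD_ub : Real.log (Aᵀ * A).det ≤ (d:ℝ) * (2 * Real.log (1+δ)) := by
    rw [← hNdet, hdetN, Real.log_prod (fun i _ => (hμpos i).ne')]
    calc ∑ i, Real.log (hNpos.1.eigenvalues i)
        ≤ ∑ _i : Fin d, (2 * Real.log (1+δ)) := by
          apply Finset.sum_le_sum
          intro i _
          have h4 := Real.log_le_log (hμpos i) (hμub i)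
          rw [Real.log_mul hp1.ne' hp1.ne'] at h4
          linarith
      _ = (d:ℝ) * (2 * Real.log (1+δ)) := by
          rw [Finset.sum_const, Finset.card_univ, Fintype.card_fin, nsmul_eq_mul]
  have hlogD_lb : (d:ℝ) * (2 * Real.log (1-δ)) ≤ Real.log (Aᵀ * A).det := by
    rw [← hNdet, hdetN, Real.log_prod (fun i _ => (hμpos i).ne')]
    calc (d:ℝ) * (2 * Real.log (1-δ))
        = ∑ _i : Fin d, (2 * Real.log (1-δ)) := by
          rw [Finset.sum_const, Finset.card_univ, Fintype.card_fin, nsmul_eq_mul]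
      _ ≤ ∑ i, Real.log (hNpos.1.eigenvalues i) := by
          apply Finset.sum_le_sum
          intro i _
          have h4 := Real.log_le_log (mul_pos h1δ h1δ) (hμlb i)
          rw [Real.log_mul h1δ.ne' h1δ.ne'] at h4
          linarith
  have hlogc_ub : Real.log c ≤ -2 * Real.log (1-δ) := by
    rw [hlogc, show (-(1:ℝ)/d) * Real.log (Aᵀ * A).det = -Real.log (Aᵀ * A).det / d by ring,
      div_le_iff₀ hd0]
    linarith [hlogD_lb]
  have hlogc_lb : -Real.log c ≤ 2 * Real.log (1+δ) := by
    rw [hlogc, show -((-(1:ℝ)/d) * Real.log (Aᵀ * A).det) = Real.log (Aᵀ * A).det / d by ring,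
      div_le_iff₀ hd0]
    linarith [hlogD_ub]
  -- the matrix c • N
  have hMpos : (c • N).PosDef := posDef_smul hNpos hcpos
  have hMn : opNorm (c • N) ≤ c * ((1+δ) * (1+δ)) := by
    rw [opNorm_smul', abs_of_pos hcpos]
    exact mul_le_mul_of_nonneg_left hNn hcpos.le
  have hMinv : (c • N)⁻¹ = c⁻¹ • N⁻¹ := by
    apply Matrix.inv_eq_left_inv
    rw [smul_mul_assoc, mul_smul_comm, smul_smul, inv_mul_cancel₀ hcpos.ne', one_smul,
      Matrix.nonsing_inv_mul N hNu]
  have hMinvn : opNorm (c • N)⁻¹ ≤ c⁻¹ * ((1-δ)⁻¹ * (1-δ)⁻¹) := by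
    rw [hMinv, opNorm_smul', abs_of_pos (inv_pos.mpr hcpos)]
    exact mul_le_mul_of_nonneg_left hNin (inv_pos.mpr hcpos).le
  have hlampos : ∀ i, 0 < hMpos.1.eigenvalues i := hMpos.eigenvalues_pos
  have hlamub : ∀ i, hMpos.1.eigenvalues i ≤ c * ((1+δ) * (1+δ)) := fun i =>
    ((le_abs_self _).trans (abs_eigenvalue_le hMpos.1 i)).trans hMn
  have hlamlbinv : ∀ i, (hMpos.1.eigenvalues i)⁻¹ ≤ c⁻¹ * ((1-δ)⁻¹ * (1-δ)⁻¹) := fun i =>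
    (eigenvalue_inv_le hMpos i).trans hMinvn
  have hbound : ∀ i, (Real.log (hMpos.1.eigenvalues i))^2 ≤ ((24/5)*δ)^2 := by
    intro i
    have hub := Real.log_le_log (hlampos i) (hlamub i)
    rw [Real.log_mul hcpos.ne' (mul_pos hp1 hp1).ne',
      Real.log_mul hp1.ne' hp1.ne'] at hub
    have hlb := Real.log_le_log (inv_pos.mpr (hlampos i)) (hlamlbinv i)
    rw [Real.log_mul (inv_pos.mpr hcpos).ne' (mul_pos (inv_pos.mpr h1δ) (inv_pos.mpr h1δ)).ne',
      Real.log_mul (inv_pos.mpr h1δ).ne' (inv_pos.mpr h1δ).ne'] at hlb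
    simp only [Real.log_inv] at hlb
    exact sq_le_sq' (by linarith) (by linarith)
  -- unfold distId
  unfold distId
  rw [dif_pos hMpos.1]
  have hsum : ∑ i, (Real.log (hMpos.1.eigenvalues i))^2 ≤ (d:ℝ) * ((24/5)*δ)^2 := by
    calc ∑ i, (Real.log (hMpos.1.eigenvalues i))^2
        ≤ ∑ _i : Fin d, ((24/5)*δ)^2 := Finset.sum_le_sum fun i _ => hbound i
      _ = (d:ℝ) * ((24/5)*δ)^2 := by
          rw [Finset.sum_const, Finset.card_univ, Fintype.card_fin, nsmul_eq_mul]
  have hss : Real.sqrt d * Real.sqrt d = (d:ℝ) := Real.mul_self_sqrt hd0.le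
  calc Real.sqrt d / 2 * Real.sqrt (∑ i, (Real.log (hMpos.1.eigenvalues i))^2)
      ≤ Real.sqrt d / 2 * Real.sqrt ((d:ℝ) * ((24/5)*δ)^2) := by
        apply mul_le_mul_of_nonneg_left (Real.sqrt_le_sqrt hsum) (div_nonneg (Real.sqrt_nonneg _) (by norm_num))
    _ = Real.sqrt d / 2 * (Real.sqrt d * ((24/5)*δ)) := by
        rw [Real.sqrt_mul hd0.le, Real.sqrt_sq (mul_nonneg (by norm_num) hδnn)]
    _ = (d:ℝ) * ((12/5)*δ) := by linear_combination ((12/5)*δ) * hss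
    _ ≤ 3 * (d:ℝ) * (a * b) * ε := by
        have h5 : (d:ℝ) * δ ≤ (d:ℝ) * (a * b * ε) := mul_le_mul_of_nonneg_left hδle hd0.le
        have h6 : 0 ≤ a * b * ε := mul_nonneg hκpos.le hεnn
        have h7 : 0 ≤ (d:ℝ) * (a * b * ε) := mul_nonneg hd0.le h6
        linarith
end
end
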